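/- Let G = S_{2n+1} and H = S_n × S_n × {e} ≤ G (permutations preserving {1,...,n}, {n+1,...,2n} and fixing 2n+1). Suppose (a_1,...,a_m) and (a'_1,...,a'_m) are two tuples of transpositions of the form (α,2n+1), both compatible with the same coloring pattern (α_i and α'_i lie in the same half {1,...,n} or {n+1,...,2n} for each i) and inducing the same equality partition π (a_i = a_j iff a'_i = a'_j iff i,j are in the same block of π). Then the products a_1⋯a_m and a'_1⋯a'_m are conjugate by an element of H. -/

import Mathlib

namespace JM

/-- A collection of sets is a partition of `Fin m`. -/
def IsPartitionOn {m : ℕ} (π : Set (Set (Fin m))) : Prop :=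
  (∀ B ∈ π, B.Nonempty) ∧ (∀ x : Fin m, ∃ B ∈ π, x ∈ B) ∧
  (∀ B ∈ π, ∀ B' ∈ π, (B ∩ B').Nonempty → B = B')

/-- The partition is non-crossing. -/
def Noncrossing {m : ℕ} (π : Set (Set (Fin m))) : Prop :=
  ∀ B ∈ π, ∀ B' ∈ π, B ≠ B' →
    ¬ ∃ k1 l1 k2 l2 : Fin m, k1 < l1 ∧ l1 < k2 ∧ k2 < l2 ∧
      k1 ∈ B ∧ k2 ∈ B ∧ l1 ∈ B' ∧ l2 ∈ B'

/-- `B` is an inner block of `B'`. -/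
def Inner {m : ℕ} (B B' : Set (Fin m)) : Prop :=
  (∃ p ∈ B', ∀ b ∈ B, p < b) ∧ (∃ q ∈ B', ∀ b ∈ B, b < q)

/-- `B` is a direct inner block of `B''` in π. -/
def DirectInner {m : ℕ} (π : Set (Set (Fin m))) (B B'' : Set (Fin m)) : Prop :=
  Inner B B'' ∧ ¬ ∃ B' ∈ π, Inner B B' ∧ Inner B' B''

/-- Non-crossing partitions with blocks of size 1 or 2, each singleton inner to a 2-block. -/
def NC1lt2 (m : ℕ) : Set (Set (Set (Fin m))) :=
  {π | IsPartitionOn π ∧ Noncrossing π ∧ (∀ B ∈ π, B.ncard = 1 ∨ B.ncard = 2) ∧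
    ∀ B ∈ π, B.ncard = 1 → ∃ B' ∈ π, B'.ncard = 2 ∧ Inner B B'}

/-- Non-crossing partitions all of whose blocks have size at least two. -/
def NCge2 (m : ℕ) : Set (Set (Set (Fin m))) :=
  {π | IsPartitionOn π ∧ Noncrossing π ∧ ∀ B ∈ π, 2 ≤ B.ncard}

/-- The merging map `F`: each 2-block is merged with its direct inner singletons. -/
def Fmap {m : ℕ} (π : Set (Set (Fin m))) : Set (Set (Fin m)) :=
  {C | ∃ B ∈ π, B.ncard = 2 ∧
    C = B ∪ {x | ∃ S ∈ π, S = {x} ∧ DirectInner π S B}}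

/-- The splitting map `G`: from each block of size at least 3, every element except the
minimum and the maximum is placed in its own singleton block. -/
def Gmap {m : ℕ} (π : Set (Set (Fin m))) : Set (Set (Fin m)) :=
  {C | (∃ B ∈ π, B.ncard ≤ 2 ∧ C = B) ∨
    (∃ B ∈ π, 3 ≤ B.ncard ∧ ∃ x ∈ B, (∃ y ∈ B, y < x) ∧ (∃ z ∈ B, x < z) ∧ C = {x}) ∨
    (∃ B ∈ π, 3 ≤ B.ncard ∧ ∃ y ∈ B, ∃ z ∈ B,
      (∀ b ∈ B, y ≤ b) ∧ (∀ b ∈ B, b ≤ z) ∧ C = {y, z})}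

/-- Minimal number of transpositions needed to write σ as a product. -/
noncomputable def permLength {β : Type*} [DecidableEq β] [Fintype β] (σ : Equiv.Perm β) : ℕ :=
  sInf {k | ∃ l : List (Equiv.Perm β), l.length = k ∧ (∀ t ∈ l, t.IsSwap) ∧ l.prod = σ}

/-- The element 2n+1 of {1,…,2n+1}. -/
def jmTop (n : ℕ) : Fin (2*n+1) := Fin.last (2*n)

/-- The tuple of Jucys-Murphy transpositions (αᵢ, 2n+1). -/
def jmTuple {n m : ℕ} (α : Fin m → Fin (2*n+1)) : Fin m → Equiv.Perm (Fin (2*n+1)) :=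
  fun i => Equiv.swap (α i) (jmTop n)

/-- The partition of indices grouping equal values of α. -/
def eqPartition {m : ℕ} {β : Type*} (α : Fin m → β) : Set (Set (Fin m)) :=
  {B | ∃ j : Fin m, B = {i | α i = α j}}

/-- A partition respects a two-coloring. -/
def Respects {m : ℕ} (π : Set (Set (Fin m))) (c : Fin m → Bool) : Prop :=
  ∀ B ∈ π, ∀ i ∈ B, ∀ j ∈ B, c i = c j

/-- Membership in the subgroup S_n × S_n × {e} of S_{2n+1}. -/
def InH (n : ℕ) (σ : Equiv.Perm (Fin (2*n+1))) : Prop :=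
  (∀ x : Fin (2*n+1), (x:ℕ) < n → ((σ x : Fin (2*n+1)) : ℕ) < n) ∧
  (∀ x : Fin (2*n+1), n ≤ (x:ℕ) → (x:ℕ) < 2*n →
    n ≤ ((σ x : Fin (2*n+1)) : ℕ) ∧ ((σ x : Fin (2*n+1)) : ℕ) < 2*n) ∧
  σ (jmTop n) = jmTop n

def e1 (n : ℕ) : Fin n ≃ {x : Fin (2*n+1) // (x:ℕ) < n} where
  toFun i := ⟨⟨i, by omega⟩, i.isLt⟩
  invFun x := ⟨(x.1 : ℕ), x.2⟩
  left_inv i := rfl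
  right_inv x := rfl

def e2 (n : ℕ) : Fin n ≃ {x : Fin (2*n+1) // n ≤ (x:ℕ) ∧ (x:ℕ) < 2*n} where
  toFun i := ⟨⟨n + i, by omega⟩, by simp only [Fin.val_mk]; omega⟩
  invFun x := ⟨(x.1 : ℕ) - n, by have := x.2; omega⟩
  left_inv i := by ext; simp
  right_inv x := by
    rcases x with ⟨x, hx⟩
    exact Subtype.ext (Fin.ext (by simp; omega))

/-- Embed a permutation of `Fin n` as a permutation of `Fin (2n+1)` acting on {1,…,n}. -/
def lift1 {n : ℕ} (τ : Equiv.Perm (Fin n)) : Equiv.Perm (Fin (2*n+1)) :=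
  τ.extendDomain (e1 n)

/-- Embed a permutation of `Fin n` as a permutation of `Fin (2n+1)` acting on {n+1,…,2n}. -/
def lift2 {n : ℕ} (τ : Equiv.Perm (Fin n)) : Equiv.Perm (Fin (2*n+1)) :=
  τ.extendDomain (e2 n)


theorem exists_perm_match {β γ : Type*} [DecidableEq β] :
    ∀ (m : ℕ) (a a' : Fin m → β) (p : β → γ),
    (∀ i j, a i = a j ↔ a' i = a' j) → (∀ i, p (a i) = p (a' i)) →
    ∃ σ : Equiv.Perm β, (∀ i, σ (a i) = a' i) ∧ ∀ x, p (σ x) = p x := by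
  intro m
  induction m with
  | zero => exact fun a a' p _ _ => ⟨1, fun i => i.elim0, fun x => rfl⟩
  | succ m ih =>
    intro a a' p hpat hp
    obtain ⟨σ, hσ, hσp⟩ := ih (a ∘ Fin.castSucc) (a' ∘ Fin.castSucc) p
      (fun i j => hpat _ _) (fun i => hp _)
    simp only [Function.comp] at hσ
    by_cases hfresh : ∃ j : Fin m, a j.castSucc = a (Fin.last m)
    · obtain ⟨j, hj⟩ := hfresh
      refine ⟨σ, fun i => ?_, hσp⟩
      induction i using Fin.lastCases with
      | last =>
        rw [← hj, hσ j, ← (hpat j.castSucc (Fin.last m)).mp hj]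
      | cast k => exact hσ k
    · push_neg at hfresh
      set u := σ (a (Fin.last m)) with hu
      set v := a' (Fin.last m) with hv
      have hpuv : p u = p v := by rw [hu, hv, hσp, hp]
      refine ⟨Equiv.swap u v * σ, fun i => ?_, fun x => ?_⟩
      · induction i using Fin.lastCases with
        | last =>
          simp only [Equiv.Perm.mul_apply, ← hu, Equiv.swap_apply_left, hv]
        | cast k =>
          have h1 : a' k.castSucc ≠ v := fun h =>
            hfresh k ((hpat k.castSucc (Fin.last m)).mpr h)
          have h2 : a' k.castSucc ≠ u := by
            rw [← hσ k]
            intro h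
            exact hfresh k (σ.injective h)
          simp only [Equiv.Perm.mul_apply, hσ k]
          exact Equiv.swap_apply_of_ne_of_ne h2 h1
      · simp only [Equiv.Perm.mul_apply]
        rw [show p (Equiv.swap u v (σ x)) = p (σ x) from ?_, hσp]
        rcases Equiv.swap_apply_def u v (σ x) with _
        rw [Equiv.swap_apply_def]
        split_ifs with h1 h2
        · rw [h1, hpuv]
        · rw [h2, hpuv]
        · rfl

/-- two tuples with the same coloring pattern and the same equality
partition have products conjugate by an element of S_n × S_n × {e}. -/
theorem conjugate_tuples (n m : ℕ) (α α' : Fin m → Fin (2*n+1))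
    (hα : ∀ i, α i ≠ jmTop n) (hα' : ∀ i, α' i ≠ jmTop n)
    (hhalf : ∀ i, (α i : ℕ) < n ↔ (α' i : ℕ) < n)
    (hpat : ∀ i j, α i = α j ↔ α' i = α' j) :
    ∃ γ : Equiv.Perm (Fin (2*n+1)), InH n γ ∧
      (List.ofFn (jmTuple α')).prod = γ * (List.ofFn (jmTuple α)).prod * γ⁻¹ := by
  classical
  set p : Fin (2*n+1) → ℕ := fun x => if (x:ℕ) < n then 0 else if (x:ℕ) < 2*n then 1 else 2
    with hpdef
  have htopval : ∀ x : Fin (2*n+1), x ≠ jmTop n → (x:ℕ) < 2*n := by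
    intro x hx
    have h1 : (x:ℕ) ≠ 2*n := by
      intro h
      exact hx (Fin.ext (by simpa [jmTop] using h))
    have h2 := x.isLt
    omega
  have hp : ∀ i, p (α i) = p (α' i) := by
    intro i
    have h1 := htopval _ (hα i)
    have h2 := htopval _ (hα' i)
    by_cases hc : (α i : ℕ) < n
    · have hc' := (hhalf i).mp hc
      simp only [p, if_pos hc, if_pos hc']
    · have hc' : ¬ ((α' i : ℕ) < n) := fun h => hc ((hhalf i).mpr h)
      simp only [p, if_neg hc, if_neg hc', if_pos h1, if_pos h2]
  obtain ⟨γ, hγ, hγp⟩ := exists_perm_match m α α' p hpat hp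
  have htv : (jmTop n : ℕ) = 2*n := rfl
  have key1 : ∀ x : Fin (2*n+1), (x:ℕ) < n → ((γ x : ℕ)) < n := by
    intro x hx
    have h := hγp x
    simp only [p, if_pos hx] at h
    by_contra hcon
    rw [if_neg hcon] at h
    split_ifs at h <;> omega
  have key2 : ∀ x : Fin (2*n+1), n ≤ (x:ℕ) → (x:ℕ) < 2*n →
      n ≤ ((γ x : ℕ)) ∧ ((γ x : ℕ)) < 2*n := by
    intro x hx1 hx2
    have h := hγp x
    simp only [p, if_neg (by omega : ¬ ((x:ℕ) < n)), if_pos hx2] at h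
    split_ifs at h <;> omega
  have key3 : γ (jmTop n) = jmTop n := by
    have h := hγp (jmTop n)
    simp only [p, htv, if_neg (by omega : ¬ (2*n < n)),
      if_neg (by omega : ¬ (2*n < 2*n))] at h
    have hlt := (γ (jmTop n)).isLt
    refine Fin.ext ?_
    rw [htv]
    split_ifs at h <;> omega
  refine ⟨γ, ⟨key1, key2, key3⟩, ?_⟩
  have hswap : ∀ i, jmTuple α' i = γ * jmTuple α i * γ⁻¹ := by
    intro i
    have h := Equiv.swap_apply_apply γ (α i) (jmTop n)
    rw [hγ i, key3] at h
    exact h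
  have hlist : List.ofFn (jmTuple α') = List.map (fun x => γ * x * γ⁻¹) (List.ofFn (jmTuple α)) := by
    rw [List.map_ofFn]
    exact congrArg List.ofFn (funext fun i => hswap i)
  rw [hlist]
  have hhom := map_list_prod (MulAut.conj γ).toMonoidHom (List.ofFn (jmTuple α))
  have hfun : (fun x : Equiv.Perm (Fin (2*n+1)) => γ * x * γ⁻¹) = ⇑(MulAut.conj γ).toMonoidHom := by
    funext x
    simp [MulAut.conj_apply]
  rw [hfun, ← hhom]
  simp [MulAut.conj_apply]

end JM
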